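/- Let U be a nonempty set of m points of PG(n,2), identified with a set of m nonzero vectors of (ZMod 2)^{n+1}. Then there exists a nonzero linear functional f : (ZMod 2)^{n+1} → ZMod 2 (equivalently, a hyperplane H_f of PG(n,2)) such that, with u = |{x ∈ U : f(x) = 0}|, one has |u − m/2| > sqrt(m/4 − m²/2^{n+3}) as real numbers. -/

import Mathlib

open Finset

noncomputable def eps (a : ZMod 2) : ℝ := if a = 0 then 1 else -1

lemma eps_zero : eps 0 = 1 := by simp [eps]

lemma eps_add (a b : ZMod 2) : eps (a + b) = eps a * eps b := by
  have h01 : ∀ a : ZMod 2, a = 0 ∨ a = 1 := by decide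
  rcases h01 a with rfl | rfl <;> rcases h01 b with rfl | rfl <;> simp [eps, show (1+1 : ZMod 2) = 0 from rfl] <;> norm_num

lemma eps_sum {ι : Type*} (s : Finset ι) (g : ι → ZMod 2) :
    eps (∑ i ∈ s, g i) = ∏ i ∈ s, eps (g i) := by
  induction s using Finset.cons_induction with
  | empty => simp [eps]
  | cons a s ha ih => rw [Finset.sum_cons, Finset.prod_cons, eps_add, ih]

lemma sum_eps_mul (c : ZMod 2) : ∑ a : ZMod 2, eps (a * c) = if c = 0 then 2 else 0 := by
  have h : (Finset.univ : Finset (ZMod 2)) = {0, 1} := by decide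
  have h01 : ∀ a : ZMod 2, a = 0 ∨ a = 1 := by decide
  rcases h01 c with rfl | rfl <;> simp [h, eps] <;> norm_num

lemma sum_eps_dot (n : ℕ) (z : Fin (n+1) → ZMod 2) :
    ∑ w : Fin (n+1) → ZMod 2, eps (∑ i, w i * z i) =
      if z = 0 then (2:ℝ)^(n+1) else 0 := by
  simp_rw [eps_sum]
  rw [← Fintype.piFinset_univ, ← Finset.prod_univ_sum (fun _ => (Finset.univ : Finset (ZMod 2))) (fun i a => eps (a * z i))]
  simp_rw [sum_eps_mul]
  rcases eq_or_ne z 0 with hz | hz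
  · subst hz; simp
  · rw [if_neg hz]
    obtain ⟨i, hi⟩ := Function.ne_iff.mp hz
    have hi' : z i ≠ 0 := by simpa using hi
    exact Finset.prod_eq_zero (Finset.mem_univ i) (by simp [hi'])

noncomputable def dotL (n : ℕ) (z : Fin (n+1) → ZMod 2) :
    (Fin (n+1) → ZMod 2) →ₗ[ZMod 2] ZMod 2 where
  toFun x := ∑ i, z i * x i
  map_add' x y := by simp [mul_add, Finset.sum_add_distrib]
  map_smul' c x := by simp [Finset.mul_sum, mul_left_comm]

lemma dotL_apply (n : ℕ) (z x : Fin (n+1) → ZMod 2) : dotL n z x = ∑ i, z i * x i := rfl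

lemma dotL_ne_zero (n : ℕ) (z : Fin (n+1) → ZMod 2) (hz : z ≠ 0) : dotL n z ≠ 0 := by
  obtain ⟨i, hi⟩ := Function.ne_iff.mp hz
  have hi' : z i ≠ 0 := by simpa using hi
  intro h
  have : dotL n z (Pi.single i 1) = 0 := by rw [h]; rfl
  rw [dotL_apply] at this
  simp [Pi.single_apply, mul_ite, Finset.sum_ite_eq'] at this
  exact hi' this

-- count formula
lemma card_filter_eq (n : ℕ) (U : Finset (Fin (n+1) → ZMod 2)) (w : Fin (n+1) → ZMod 2) :
    ((U.filter fun x => ∑ i, w i * x i = 0).card : ℝ) =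
      U.card / 2 + (1/2) * ∑ x ∈ U, eps (∑ i, w i * x i) := by
  rw [Finset.card_filter]
  push_cast
  have : ∀ x ∈ U, ((if (∑ i, w i * x i) = 0 then (1:ℝ) else 0)) =
      1/2 + (1/2) * eps (∑ i, w i * x i) := by
    intro x _
    rcases eq_or_ne (∑ i, w i * x i) 0 with h | h <;> simp [h, eps] <;> norm_num
  rw [Finset.sum_congr rfl this, Finset.sum_add_distrib, Finset.sum_const, ← Finset.mul_sum]
  push_cast
  ring

lemma sum_sq (n : ℕ) (U : Finset (Fin (n+1) → ZMod 2)) :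
    ∑ w : Fin (n+1) → ZMod 2, (∑ x ∈ U, eps (∑ i, w i * x i))^2
      = U.card * 2^(n+1) := by
  have hneg : ∀ a : ZMod 2, -a = a := by decide
  have hself : ∀ a : ZMod 2, a + a = 0 := by decide
  simp_rw [sq, Finset.sum_mul_sum]
  have h1 : ∀ (w x y : Fin (n+1) → ZMod 2), eps (∑ i, w i * x i) * eps (∑ i, w i * y i)
      = eps (∑ i, w i * (x + y) i) := by
    intro w x y
    rw [← eps_add, ← Finset.sum_add_distrib]
    exact congrArg eps (Finset.sum_congr rfl fun i _ => by simp [mul_add])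
  simp_rw [h1]
  rw [Finset.sum_comm]
  have h2 : ∀ x ∈ U, (∑ w : Fin (n+1) → ZMod 2, ∑ y ∈ U, eps (∑ i, w i * (x + y) i))
      = (2:ℝ)^(n+1) := by
    intro x hx
    rw [Finset.sum_comm]
    simp_rw [sum_eps_dot]
    have h3 : ∀ y ∈ U, ((if x + y = 0 then ((2:ℝ))^(n+1) else 0))
        = if y = x then ((2:ℝ))^(n+1) else 0 := by
      intro y _
      congr 1
      simp only [eq_iff_iff]
      constructor
      · intro h
        have hy : y = -x := eq_neg_of_add_eq_zero_right h
        rw [hy]; exact funext fun i => hneg (x i)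
      · intro h; rw [h]; exact funext fun i => hself (x i)
    rw [Finset.sum_congr rfl h3, Finset.sum_ite_eq' U x, if_pos hx]
  rw [Finset.sum_congr rfl h2, Finset.sum_const, nsmul_eq_mul]

theorem exists_hyperplane_large_deviation (n : ℕ) (U : Finset (Fin (n + 1) → ZMod 2))
    (h0 : (0 : Fin (n + 1) → ZMod 2) ∉ U) (hne : U.Nonempty) (m : ℕ) (hm : U.card = m) :
    ∃ f : (Fin (n + 1) → ZMod 2) →ₗ[ZMod 2] ZMod 2, f ≠ 0 ∧
      |((U.filter fun x => f x = 0).card : ℝ) - m / 2| >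
        Real.sqrt (m / 4 - m ^ 2 / 2 ^ (n + 3)) := by
  set N : ℝ := (2:ℝ)^(n+1) with hNdef
  have hN : (0:ℝ) < N := by positivity
  set t : ℝ := (m:ℝ) / 4 - (m:ℝ) ^ 2 / 2 ^ (n + 3) with htdef
  -- deviation formula
  have hD : ∀ w : Fin (n+1) → ZMod 2,
      ((U.filter fun x => ∑ i, w i * x i = 0).card : ℝ) - m/2
        = (1/2) * ∑ x ∈ U, eps (∑ i, w i * x i) := by
    intro w
    rw [card_filter_eq, hm]
    ring
  -- total sum of squares
  have htot : ∑ w : Fin (n+1) → ZMod 2, ((1/2) * ∑ x ∈ U, eps (∑ i, w i * x i))^2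
      = m * N / 4 := by
    simp_rw [mul_pow]
    rw [← Finset.mul_sum, sum_sq, hm, hNdef]
    ring
  -- value at zero
  have hzero : ((1/2) * ∑ x ∈ U, eps (∑ i, (0 : Fin (n+1) → ZMod 2) i * x i))^2
      = (m:ℝ)^2/4 := by
    have h1 : ∀ x ∈ U, eps (∑ i, (0 : Fin (n+1) → ZMod 2) i * x i) = 1 := by
      intro x _; simp [eps]
    rw [Finset.sum_congr rfl h1, Finset.sum_const, hm]
    push_cast; ring
  set s : Finset (Fin (n+1) → ZMod 2) := Finset.univ.erase 0 with hsdef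
  have hcard_univ : Fintype.card (Fin (n+1) → ZMod 2) = 2^(n+1) := by
    simp [Fintype.card_fun]
  have hcard_s : s.card = 2^(n+1) - 1 := by
    rw [hsdef, Finset.card_erase_of_mem (Finset.mem_univ 0), Finset.card_univ, hcard_univ]
  have hs_sum : ∑ w ∈ s, ((1/2) * ∑ x ∈ U, eps (∑ i, w i * x i))^2
      = m * N / 4 - (m:ℝ)^2/4 := by
    rw [hsdef, Finset.sum_erase_eq_sub (Finset.mem_univ (0 : Fin (n+1) → ZMod 2)),
      htot, hzero]
  -- bounds on m
  have hm1 : 1 ≤ m := by rw [← hm]; exact Finset.card_pos.mpr hne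
  have hmle : m ≤ 2^(n+1) - 1 := by
    have hsub : U ⊆ s := fun x hx => Finset.mem_erase.mpr
      ⟨fun h => h0 (h ▸ hx), Finset.mem_univ x⟩
    calc m = U.card := hm.symm
      _ ≤ s.card := Finset.card_le_card hsub
      _ = 2^(n+1) - 1 := hcard_s
  have hmR : (m:ℝ) ≤ N - 1 := by
    have : ((m:ℕ):ℝ) ≤ ((2^(n+1) - 1 : ℕ):ℝ) := Nat.cast_le.mpr hmle
    rwa [Nat.cast_sub (Nat.one_le_two_pow), Nat.cast_pow, Nat.cast_ofNat, Nat.cast_one] at this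
  have hm1R : (1:ℝ) ≤ (m:ℝ) := by exact_mod_cast hm1
  have hprod : (0:ℝ) < (m:ℝ) * (N - (m:ℝ)) := mul_pos (by linarith) (by linarith)
  have ht_eq : t = (m:ℝ) * (N - (m:ℝ)) / (4 * N) := by
    rw [htdef, hNdef]
    have h23 : (2:ℝ)^(n+3) = 2^(n+1) * 4 := by rw [show n+3 = (n+1)+2 by ring, pow_add]; norm_num
    rw [h23]
    field_simp
  have ht0 : 0 < t := by rw [ht_eq]; exact div_pos hprod (by positivity)
  -- key strict inequality
  have hkey : (s.card : ℝ) * t < m * N / 4 - (m:ℝ)^2/4 := by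
    have hc : (s.card : ℝ) = N - 1 := by
      rw [hcard_s, Nat.cast_sub (Nat.one_le_two_pow), Nat.cast_pow, Nat.cast_ofNat,
        Nat.cast_one, hNdef]
    rw [hc, ht_eq, ← mul_div_assoc, div_lt_iff₀ (by positivity : (0:ℝ) < 4 * N)]
    nlinarith [hprod]
  -- pigeonhole
  have hex : ∃ w ∈ s, t < ((1/2) * ∑ x ∈ U, eps (∑ i, w i * x i))^2 := by
    by_contra h
    push_neg at h
    have hle := Finset.sum_le_card_nsmul s
      (fun w => ((1/2) * ∑ x ∈ U, eps (∑ i, w i * x i))^2) t h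
    rw [nsmul_eq_mul, hs_sum] at hle
    linarith
  obtain ⟨w, hws, hwt⟩ := hex
  have hwne : w ≠ 0 := (Finset.mem_erase.mp hws).1
  refine ⟨dotL n w, dotL_ne_zero n w hwne, ?_⟩
  simp only [dotL_apply]
  erw [hD w]
  have habs : 0 < |(1/2) * ∑ x ∈ U, eps (∑ i, w i * x i)| := by
    rcases eq_or_ne ((1/2) * ∑ x ∈ U, eps (∑ i, w i * x i)) 0 with h | h
    · rw [h] at hwt; simp at hwt; linarith
    · exact abs_pos.mpr h
  exact (Real.sqrt_lt' habs).mpr (by rw [sq_abs]; exact hwt)
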